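/- Let S be a nonempty finite set, let (M_j)_{j∈S} be N×N complex matrices with operator norm ‖M_j‖ ≤ h for every j ∈ S, let 𝒪 be an N×N positive semidefinite matrix, and let β ∈ ℂ. Then Σ_{l=|S|}^{∞} (|β|^l / l!) · Σ_{f : [l] → S surjective} |Tr[ M_{f(1)}·M_{f(2)}·⋯·M_{f(l)} · 𝒪 ]| ≤ Tr[𝒪] · (e^{|β|h} − 1)^{|S|}. In particular, the cluster weight W_S(β) = Σ_{l=|S|}^{∞} ((−β)^l / l!) · Σ_{f : [l] → S surjective} Tr[ M_{f(1)}·⋯·M_{f(l)} · 𝒪 ] converges absolutely and satisfies |W_S(β)| ≤ Tr[𝒪] · (e^{|β|h} − 1)^{|S|}. -/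

import Mathlib

open Finset Matrix
open scoped ComplexOrder

section Aux

open scoped MatrixOrder in
lemma psd_exists_conjTranspose_mul_self {N : ℕ} (O : Matrix (Fin N) (Fin N) ℂ)
    (hO : O.PosSemidef) : ∃ C : Matrix (Fin N) (Fin N) ℂ, O = Cᴴ * C := by
  classical
  obtain ⟨X, hX, -, rfl⟩ :=
    CFC.exists_sqrt_of_isSelfAdjoint_of_quasispectrumRestricts hO.isHermitian
      (QuasispectrumRestricts.nnreal_of_nonneg hO.nonneg)
  exact ⟨X, by simp only [← Matrix.star_eq_conjTranspose, hX.star_eq]⟩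

lemma mem_finset_inf' {α ι : Type*} [Fintype α] [DecidableEq α] {s : Finset ι}
    {F : ι → Finset α} {a : α} : a ∈ s.inf F ↔ ∀ i ∈ s, a ∈ F i := by
  rw [← Finset.singleton_subset_iff, ← Finset.le_iff_subset, Finset.le_inf_iff]
  simp

lemma card_surj_eq {S : Type*} [Fintype S] [DecidableEq S] (l : ℕ) :
    (#((Finset.univ : Finset (Fin l → S)).filter Function.Surjective) : ℤ) =
      ∑ t ∈ (Finset.univ : Finset S).powerset, (-1 : ℤ) ^ #t * (#(tᶜ) : ℤ) ^ l := by
  classical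
  have h1 : (Finset.univ : Finset (Fin l → S)).filter Function.Surjective
      = (Finset.univ : Finset S).inf
          (fun j => ((Finset.univ : Finset (Fin l → S)).filter (fun f => ∀ i, f i ≠ j))ᶜ) := by
    ext f
    rw [mem_finset_inf']
    simp only [Finset.mem_filter, Finset.mem_univ, true_and, Finset.mem_compl,
      Function.Surjective]
    push_neg
    constructor
    · rintro hf j - ; obtain ⟨i, hi⟩ := hf j; exact ⟨i, hi⟩
    · intro hf j; obtain ⟨i, hi⟩ := hf j trivial; exact ⟨i, hi⟩
  rw [h1, Finset.inclusion_exclusion_card_inf_compl]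
  refine Finset.sum_congr rfl fun t _ => ?_
  congr 2
  have h2 : (t.inf fun j => (Finset.univ : Finset (Fin l → S)).filter (fun f => ∀ i, f i ≠ j))
      = Fintype.piFinset (fun _ : Fin l => tᶜ) := by
    ext f
    rw [mem_finset_inf', Fintype.mem_piFinset]
    simp only [Finset.mem_filter, Finset.mem_univ, true_and, Finset.mem_compl]
    constructor
    · intro hf i ht; exact hf _ ht i rfl
    · rintro hf j hj i rfl; exact hf i hj
  rw [h2, Fintype.card_piFinset]
  simp

lemma hasSum_surj {S : Type*} [Fintype S] [DecidableEq S] (y : ℝ) :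
    HasSum (fun l : ℕ => y ^ l / l.factorial *
        (#((Finset.univ : Finset (Fin l → S)).filter Function.Surjective) : ℝ))
      ((Real.exp y - 1) ^ Fintype.card S) := by
  classical
  set n := Fintype.card S with hn
  have key : ∀ l : ℕ, y ^ l / l.factorial *
        (#((Finset.univ : Finset (Fin l → S)).filter Function.Surjective) : ℝ)
      = ∑ t ∈ (Finset.univ : Finset S).powerset,
          (-1 : ℝ) ^ #t * (((#(tᶜ) : ℝ) * y) ^ l / l.factorial) := by
    intro l
    have := card_surj_eq (S := S) l
    have h2 : (#((Finset.univ : Finset (Fin l → S)).filter Function.Surjective) : ℝ)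
        = ∑ t ∈ (Finset.univ : Finset S).powerset, (-1 : ℝ) ^ #t * (#(tᶜ) : ℝ) ^ l := by
      exact_mod_cast congrArg (Int.cast : ℤ → ℝ) this
    rw [h2, Finset.mul_sum]
    refine Finset.sum_congr rfl fun t _ => ?_
    rw [mul_pow]
    ring
  have hsum : HasSum (fun l : ℕ => ∑ t ∈ (Finset.univ : Finset S).powerset,
          (-1 : ℝ) ^ #t * (((#(tᶜ) : ℝ) * y) ^ l / l.factorial))
      (∑ t ∈ (Finset.univ : Finset S).powerset,
          (-1 : ℝ) ^ #t * Real.exp ((#(tᶜ) : ℝ) * y)) := by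
    refine hasSum_sum fun t _ => ?_
    have := NormedSpace.expSeries_div_hasSum_exp ((#(tᶜ) : ℝ) * y)
    rw [← Real.exp_eq_exp_ℝ] at this
    exact this.mul_left _
  have heval : (∑ t ∈ (Finset.univ : Finset S).powerset,
          (-1 : ℝ) ^ #t * Real.exp ((#(tᶜ) : ℝ) * y))
      = (Real.exp y - 1) ^ n := by
    have hcompl : ∀ t ∈ (Finset.univ : Finset S).powerset,
        (-1 : ℝ) ^ #t * Real.exp ((#(tᶜ) : ℝ) * y)
          = (fun m : ℕ => (-1 : ℝ) ^ m * Real.exp ((n - m : ℕ) * y)) #t := by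
      intro t _
      simp [Finset.card_compl, hn]
    rw [Finset.sum_congr rfl hcompl,
      Finset.sum_powerset_apply_card (fun m : ℕ => (-1 : ℝ) ^ m * Real.exp ((n - m : ℕ) * y))]
    simp only [Finset.card_univ, ← hn, nsmul_eq_mul]
    rw [sub_pow]
    rw [← Finset.sum_range_reflect]
    refine Finset.sum_congr rfl fun m hm => ?_
    rw [Finset.mem_range] at hm
    have hmn : m ≤ n := by omega
    have h3 : n + 1 - 1 - m = n - m := by omega
    rw [h3]
    have h4 : n - (n - m) = m := by omega
    have h5 : (-1 : ℝ) ^ (m + n) = (-1) ^ (n - m) := by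
      rw [show m + n = n - m + 2 * m by omega, pow_add, pow_mul]
      norm_num
    have h6 : Real.exp ((m : ℕ) * y) = Real.exp y ^ m := by
      rw [← Real.exp_nat_mul]
    rw [h4, h5, Nat.choose_symm hmn, one_pow, h6]
    ring
  rw [funext key, ← heval] at *
  exact hsum

lemma trace_aux {N : ℕ} (A O : Matrix (Fin N) (Fin N) ℂ) (hO : O.PosSemidef) :
    ‖(A * O).trace‖ ≤
      ‖(Matrix.toEuclideanCLM (𝕜 := ℂ) A :
        EuclideanSpace ℂ (Fin N) →L[ℂ] EuclideanSpace ℂ (Fin N))‖ * (O.trace).re := by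
  classical
  obtain ⟨C, rfl⟩ := psd_exists_conjTranspose_mul_self _ hO
  set T := (Matrix.toEuclideanCLM (𝕜 := ℂ) A :
      EuclideanSpace ℂ (Fin N) →L[ℂ] EuclideanSpace ℂ (Fin N)) with hT
  set v : Fin N → EuclideanSpace ℂ (Fin N) :=
    fun i => (WithLp.equiv 2 (Fin N → ℂ)).symm (fun j => star (C i j)) with hv
  have claim0 : ((Cᴴ * C).trace).re = ∑ i, ‖v i‖ ^ 2 := by
    have h1 : ∀ i, ‖v i‖ ^ 2 = ∑ j, Complex.normSq (C i j) := by
      intro i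
      rw [EuclideanSpace.norm_eq, Real.sq_sqrt (by positivity)]
      refine Finset.sum_congr rfl fun j _ => ?_
      simp only [hv, WithLp.equiv_symm_apply, PiLp.toLp_apply, norm_star]
      rw [Complex.sq_norm]
    simp only [h1]
    rw [Matrix.trace, Complex.re_sum]
    rw [Finset.sum_comm]
    refine Finset.sum_congr rfl fun i _ => ?_
    rw [Matrix.diag, Matrix.mul_apply, Complex.re_sum]
    refine Finset.sum_congr rfl fun j _ => ?_
    rw [Matrix.conjTranspose_apply]
    simp [Complex.normSq_apply, Complex.mul_re]
  have claim1 : (A * (Cᴴ * C)).trace = ∑ i, (inner ℂ (v i) (T (v i)) : ℂ) := by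
    have h2 : (A * (Cᴴ * C)).trace = (C * A * Cᴴ).trace := by
      rw [← Matrix.mul_assoc, Matrix.trace_mul_comm, ← Matrix.mul_assoc]
    rw [h2, Matrix.trace]
    refine Finset.sum_congr rfl fun i _ => ?_
    have h3 : T (v i) = (WithLp.equiv 2 (Fin N → ℂ)).symm
        (Matrix.toLin' A (fun j => star (C i j))) := by
      rw [hT, hv, Matrix.toEuclideanCLM_toLp]; rfl
    rw [h3]
    rw [PiLp.inner_apply]
    simp only [hv, WithLp.equiv_symm_apply, PiLp.toLp_apply, RCLike.inner_apply, starRingEnd_apply,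
      star_star, Matrix.toLin'_apply, Matrix.mulVec, dotProduct]
    rw [Matrix.diag, Matrix.mul_apply]
    simp only [Matrix.mul_apply, Matrix.conjTranspose_apply, Finset.sum_mul, Finset.mul_sum]
    rw [Finset.sum_comm]
    refine Finset.sum_congr rfl fun j _ => Finset.sum_congr rfl fun k _ => ?_
    ring_nf
  rw [claim1, claim0, Finset.mul_sum]
  refine le_trans (norm_sum_le _ _) (Finset.sum_le_sum fun i _ => ?_)
  calc ‖(inner ℂ (v i) (T (v i)) : ℂ)‖ ≤ ‖v i‖ * ‖T (v i)‖ := norm_inner_le_norm _ _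
    _ ≤ ‖v i‖ * (‖T‖ * ‖v i‖) :=
        mul_le_mul_of_nonneg_left (T.le_opNorm _) (norm_nonneg _)
    _ = ‖T‖ * ‖v i‖ ^ 2 := by ring

lemma trace_re_nonneg' {N : ℕ} (O : Matrix (Fin N) (Fin N) ℂ) (hO : O.PosSemidef) :
    0 ≤ (O.trace).re := by
  classical
  obtain ⟨C, rfl⟩ := psd_exists_conjTranspose_mul_self _ hO
  rw [Matrix.trace, Complex.re_sum]
  refine Finset.sum_nonneg fun k _ => ?_
  rw [Matrix.diag, Matrix.mul_apply, Complex.re_sum]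
  refine Finset.sum_nonneg fun i _ => ?_
  rw [Matrix.conjTranspose_apply]
  have : (star (C i k) * C i k).re = Complex.normSq (C i k) := by
    simp [Complex.normSq_apply, Complex.mul_re]
  rw [this]
  exact Complex.normSq_nonneg _

lemma norm_list_prod_le {N : ℕ} {h : ℝ} (h0 : 0 ≤ h) :
    ∀ (L : List (Matrix (Fin N) (Fin N) ℂ)),
      (∀ A ∈ L, ‖(Matrix.toEuclideanCLM (𝕜 := ℂ) A :
        EuclideanSpace ℂ (Fin N) →L[ℂ] EuclideanSpace ℂ (Fin N))‖ ≤ h) →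
      ‖(Matrix.toEuclideanCLM (𝕜 := ℂ) L.prod :
        EuclideanSpace ℂ (Fin N) →L[ℂ] EuclideanSpace ℂ (Fin N))‖ ≤ h ^ L.length
  | [], _ => by
      simp only [List.prod_nil, _root_.map_one, List.length_nil, pow_zero]
      exact ContinuousLinearMap.norm_id_le
  | A :: L, hL => by
      rw [List.prod_cons, _root_.map_mul, List.length_cons, pow_succ']
      refine le_trans (norm_mul_le _ _) ?_
      have hA := hL A List.mem_cons_self
      have hrest := norm_list_prod_le h0 L (fun B hB => hL B (List.mem_cons_of_mem _ hB))
      exact mul_le_mul hA hrest (norm_nonneg _) h0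

end Aux

/-- **Absolute convergence and bound for the cluster weight `W_S(β)`.**
Let `(M_j)_{j∈S}` be `N×N` complex matrices of operator norm at most `h`, `𝒪` a positive
semidefinite `N×N` matrix and `β ∈ ℂ`. Then the series of absolute values
`Σ_{l} (|β|^l/l!) Σ_{f:[l]↠S} |Tr[M_{f(1)}⋯M_{f(l)}𝒪]|` is summable with sum at most
`Tr[𝒪]·(e^{|β|h}−1)^{|S|}`, and the cluster weight
`W_S(β) = Σ_l ((−β)^l/l!) Σ_{f:[l]↠S} Tr[M_{f(1)}⋯M_{f(l)}𝒪]` converges (absolutely)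
with `|W_S(β)| ≤ Tr[𝒪]·(e^{|β|h}−1)^{|S|}`.
(Terms with `l < |S|` vanish since there is no surjection from `[l]` onto `S`.) -/
theorem cluster_weight_bound
    {S : Type*} [Fintype S] [DecidableEq S] [Nonempty S]
    (N : ℕ) (M : S → Matrix (Fin N) (Fin N) ℂ) (h : ℝ)
    (hM : ∀ j : S, ‖(Matrix.toEuclideanCLM (𝕜 := ℂ) (M j) :
        EuclideanSpace ℂ (Fin N) →L[ℂ] EuclideanSpace ℂ (Fin N))‖ ≤ h)
    (𝒪 : Matrix (Fin N) (Fin N) ℂ) (h𝒪 : 𝒪.PosSemidef) (β : ℂ) :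
    (Summable (fun l : ℕ => ‖β‖ ^ l / (Nat.factorial l) *
        ∑ f ∈ (Finset.univ : Finset (Fin l → S)).filter Function.Surjective,
          ‖Matrix.trace ((List.ofFn fun i => M (f i)).prod * 𝒪)‖) ∧
      ∑' l : ℕ, (‖β‖ ^ l / (Nat.factorial l) *
        ∑ f ∈ (Finset.univ : Finset (Fin l → S)).filter Function.Surjective,
          ‖Matrix.trace ((List.ofFn fun i => M (f i)).prod * 𝒪)‖) ≤
        (Matrix.trace 𝒪).re * (Real.exp (‖β‖ * h) - 1) ^ (Fintype.card S)) ∧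
    (∃ W : ℂ, HasSum (fun l : ℕ => (-β) ^ l / (Nat.factorial l) *
        ∑ f ∈ (Finset.univ : Finset (Fin l → S)).filter Function.Surjective,
          Matrix.trace ((List.ofFn fun i => M (f i)).prod * 𝒪)) W ∧
      ‖W‖ ≤ (Matrix.trace 𝒪).re * (Real.exp (‖β‖ * h) - 1) ^ (Fintype.card S)) := by
  classical
  have h0 : 0 ≤ h := le_trans (norm_nonneg _) (hM (Classical.arbitrary S))
  have ht0 : 0 ≤ (Matrix.trace 𝒪).re := trace_re_nonneg' 𝒪 h𝒪
  set t0 : ℝ := (Matrix.trace 𝒪).re with ht0def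
  set n := Fintype.card S with hn
  set T : ℕ → ℝ := fun l => ‖β‖ ^ l / (Nat.factorial l) *
      ∑ f ∈ (Finset.univ : Finset (Fin l → S)).filter Function.Surjective,
        ‖Matrix.trace ((List.ofFn fun i => M (f i)).prod * 𝒪)‖ with hTdef
  set c : ℕ → ℝ := fun l => (‖β‖ * h) ^ l / l.factorial *
      (#((Finset.univ : Finset (Fin l → S)).filter Function.Surjective) : ℝ) with hc
  have hs : HasSum c ((Real.exp (‖β‖ * h) - 1) ^ n) := hasSum_surj _
  have tracebnd : ∀ (l : ℕ) (f : Fin l → S),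
      ‖Matrix.trace ((List.ofFn fun i => M (f i)).prod * 𝒪)‖ ≤ h ^ l * t0 := by
    intro l f
    refine le_trans (trace_aux _ _ h𝒪) ?_
    refine mul_le_mul_of_nonneg_right ?_ ht0
    have hmem : ∀ A ∈ (List.ofFn fun i => M (f i)),
        ‖(Matrix.toEuclideanCLM (𝕜 := ℂ) A :
          EuclideanSpace ℂ (Fin N) →L[ℂ] EuclideanSpace ℂ (Fin N))‖ ≤ h := by
      intro A hA
      rw [List.mem_ofFn] at hA
      obtain ⟨i, rfl⟩ := hA
      exact hM _
    have := norm_list_prod_le h0 (List.ofFn fun i => M (f i)) hmem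
    rwa [List.length_ofFn] at this
  have Tnn : ∀ l, 0 ≤ T l := by
    intro l
    refine mul_nonneg (by positivity) (Finset.sum_nonneg fun f _ => ?_)
    exact norm_nonneg _
  have Tle : ∀ l : ℕ, T l ≤ t0 * c l := by
    intro l
    have hsumle : ∑ f ∈ (Finset.univ : Finset (Fin l → S)).filter Function.Surjective,
        ‖Matrix.trace ((List.ofFn fun i => M (f i)).prod * 𝒪)‖
        ≤ (#((Finset.univ : Finset (Fin l → S)).filter Function.Surjective) : ℝ) * (h ^ l * t0) := by
      refine le_trans (Finset.sum_le_sum fun f _ => tracebnd l f) ?_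
      rw [Finset.sum_const, nsmul_eq_mul]
    calc T l ≤ ‖β‖ ^ l / (Nat.factorial l) *
        ((#((Finset.univ : Finset (Fin l → S)).filter Function.Surjective) : ℝ) * (h ^ l * t0)) :=
          mul_le_mul_of_nonneg_left hsumle (by positivity)
      _ = t0 * c l := by rw [hc]; dsimp only; rw [mul_pow]; ring
  have sumc : Summable (fun l => t0 * c l) := hs.summable.mul_left t0
  have S1 : Summable T := Summable.of_nonneg_of_le Tnn Tle sumc
  have tsum1 : ∑' l, T l ≤ t0 * (Real.exp (‖β‖ * h) - 1) ^ n := by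
    calc ∑' l, T l ≤ ∑' l, t0 * c l := Summable.tsum_le_tsum Tle S1 sumc
      _ = t0 * ∑' l, c l := tsum_mul_left
      _ = t0 * (Real.exp (‖β‖ * h) - 1) ^ n := by rw [hs.tsum_eq]
  refine ⟨⟨S1, tsum1⟩, ?_⟩
  set W : ℕ → ℂ := fun l => (-β) ^ l / (Nat.factorial l) *
      ∑ f ∈ (Finset.univ : Finset (Fin l → S)).filter Function.Surjective,
        Matrix.trace ((List.ofFn fun i => M (f i)).prod * 𝒪) with hW
  have normW : ∀ l, ‖W l‖ ≤ T l := by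
    intro l
    rw [hW]
    dsimp only
    rw [norm_mul, norm_div, norm_pow, norm_neg]
    have hfac : ‖((Nat.factorial l : ℕ) : ℂ)‖ = ((Nat.factorial l : ℕ) : ℝ) := by
      rw [Complex.norm_natCast]
    rw [hfac, hTdef]
    dsimp only
    refine mul_le_mul_of_nonneg_left ?_ (by positivity)
    refine le_trans (norm_sum_le _ _) (le_of_eq (Finset.sum_congr rfl fun f _ => ?_))
    rfl
  have Snorm : Summable (fun l => ‖W l‖) :=
    Summable.of_nonneg_of_le (fun l => norm_nonneg _) normW S1
  have S2 : Summable W := Summable.of_norm Snorm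
  refine ⟨∑' l, W l, S2.hasSum, ?_⟩
  calc ‖∑' l, W l‖ ≤ ∑' l, ‖W l‖ := norm_tsum_le_tsum_norm Snorm
    _ ≤ ∑' l, T l := Summable.tsum_le_tsum normW Snorm S1
    _ ≤ t0 * (Real.exp (‖β‖ * h) - 1) ^ n := tsum1
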